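/- For each integer k ≥ 1, the polynomial x^{k+1} - 2x^k + x - 1 has a unique root in the open interval (1,2). -/

import Mathlib

open Set

theorem unique_root_alpha (k : ℕ) (hk : 1 ≤ k) :
    ∃! x : ℝ, x ∈ Set.Ioo (1:ℝ) 2 ∧ x^(k+1) - 2*x^k + x - 1 = 0 := by
  obtain ⟨m, rfl⟩ : ∃ m, k = m + 1 := ⟨k - 1, (Nat.succ_pred_eq_of_pos hk).symm⟩
  clear hk
  set g : ℝ → ℝ := fun x => x - 2 + (x - 1) / x ^ (m + 1) with hg
  -- g is strictly monotone on [1,2]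
  have hgmono : StrictMonoOn g (Icc (1:ℝ) 2) := by
    have hcont : ContinuousOn g (Icc 1 2) := by
      apply ContinuousOn.add (by fun_prop)
      apply ContinuousOn.div (by fun_prop) (by fun_prop)
      intro x hx
      have : (0:ℝ) < x := by linarith [hx.1]
      exact pow_ne_zero _ this.ne'
    apply strictMonoOn_of_deriv_pos (convex_Icc 1 2) hcont
    intro x hx
    rw [interior_Icc] at hx
    have hx1 : (1:ℝ) < x := hx.1
    have hx0 : (0:ℝ) < x := by linarith
    have hxk : x ^ (m + 1) ≠ 0 := pow_ne_zero _ hx0.ne'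
    have hd : HasDerivAt g
        (1 + (1 * x ^ (m + 1) - (x - 1) * (((m:ℝ) + 1) * x ^ m)) / (x ^ (m + 1)) ^ 2) x := by
      have h1 : HasDerivAt (fun x : ℝ => x - 2) 1 x := (hasDerivAt_id x).sub_const 2
      have h2 : HasDerivAt (fun x : ℝ => (x - 1) / x ^ (m + 1))
          ((1 * x ^ (m + 1) - (x - 1) * (((m:ℝ) + 1) * x ^ m)) / (x ^ (m + 1)) ^ 2) x := by
        have := ((hasDerivAt_id x).sub_const 1).div (hasDerivAt_pow (m + 1) x) hxk
        simpa [Pi.div_def] using this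
      simpa [Pi.add_def, hg] using h1.add h2
    rw [hd.deriv]
    have hb : 1 + ((m:ℝ) + 2) * (x - 1) ≤ x ^ (m + 2) := by
      have := one_add_mul_le_pow (show (-2:ℝ) ≤ x - 1 by linarith) (m + 2)
      have h' : (1 + (x - 1)) ^ (m + 2) = x ^ (m + 2) := by ring_nf
      push_cast at this
      linarith [this, h'.le, h'.ge]
    have hbr : 0 < x ^ (m + 2) + x - ((m:ℝ) + 1) * (x - 1) := by nlinarith
    have hN : 0 < x ^ m * (x ^ (m + 2) + x - ((m:ℝ) + 1) * (x - 1)) :=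
      mul_pos (pow_pos hx0 m) hbr
    have heq : 1 + (1 * x ^ (m + 1) - (x - 1) * (((m:ℝ) + 1) * x ^ m)) / (x ^ (m + 1)) ^ 2
        = x ^ m * (x ^ (m + 2) + x - ((m:ℝ) + 1) * (x - 1)) / (x ^ (m + 1)) ^ 2 := by
      field_simp
      ring
    rw [heq]
    exact div_pos hN (pow_pos (pow_pos hx0 _) 2)
  -- zeros of f in (1,2) are zeros of g
  have hfg : ∀ z ∈ Ioo (1:ℝ) 2, z ^ (m + 1 + 1) - 2 * z ^ (m + 1) + z - 1 = 0 → g z = 0 := by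
    intro z hz h
    have hz0 : (0:ℝ) < z := by linarith [hz.1]
    have hzk : z ^ (m + 1) ≠ 0 := pow_ne_zero _ hz0.ne'
    simp only [hg]
    field_simp
    linear_combination h
  -- existence via IVT
  have hfc : ContinuousOn (fun x : ℝ => x ^ (m + 1 + 1) - 2 * x ^ (m + 1) + x - 1) (Icc 1 2) := by
    fun_prop
  have hmem : (0:ℝ) ∈ Ioo ((fun x : ℝ => x ^ (m + 1 + 1) - 2 * x ^ (m + 1) + x - 1) 1)
      ((fun x : ℝ => x ^ (m + 1 + 1) - 2 * x ^ (m + 1) + x - 1) 2) := by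
    constructor
    · norm_num
    · simp only
      have : (2:ℝ) ^ (m + 1 + 1) = 2 * 2 ^ (m + 1) := by ring
      rw [this]
      norm_num
  obtain ⟨x, hx, hfx⟩ := intermediate_value_Ioo (by norm_num : (1:ℝ) ≤ 2) hfc hmem
  refine ⟨x, ⟨hx, hfx⟩, ?_⟩
  rintro y ⟨hy, hfy⟩
  have hgy : g y = 0 := hfg y hy hfy
  have hgx : g x = 0 := hfg x hx hfx
  have hyI : y ∈ Icc (1:ℝ) 2 := ⟨hy.1.le, hy.2.le⟩
  have hxI : x ∈ Icc (1:ℝ) 2 := ⟨hx.1.le, hx.2.le⟩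
  exact hgmono.injOn hyI hxI (hgy.trans hgx.symm)
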